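/- arXiv:2007.01631 — 3 statements merged into one kernel-verified Lean document; each statement's English description precedes it below -/
import Mathlib

section
/- Let t > 0 and let h₁, h₂ ∈ ℝ satisfy 0 < h₁ ≤ 1/t and −1/t ≤ h₂ < 0. Then the difference quotients of h ↦ δ_{(1+h)t} fail the Cauchy condition in the flat metric: ρ_F( h₁⁻¹·(δ_{(1+h₁)t} − δ_t), h₂⁻¹·(δ_{(1+h₂)t} − δ_t) ) ≥ 2t. Consequently h ↦ δ_{(1+h)t} is not differentiable at h = 0 with respect to ρ_F. -/
open MeasureTheory Filter Topology
open scoped NNReal ENNReal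

/-- Integral of a real-valued function against a finite signed Borel measure,
via the Jordan decomposition. -/
noncomputable def sInt (μ : SignedMeasure ℝ) (f : ℝ → ℝ) : ℝ :=
  (∫ x, f x ∂μ.toJordanDecomposition.posPart) -
    ∫ x, f x ∂μ.toJordanDecomposition.negPart

/-- The flat metric (bounded Lipschitz distance) between finite signed Borel
measures on `ℝ`. -/
noncomputable def flatDist (μ ν : SignedMeasure ℝ) : ℝ :=
  sSup {r : ℝ | ∃ f : ℝ → ℝ, (∀ x, |f x| ≤ 1) ∧ LipschitzWith 1 f ∧ r = sInt (μ - ν) f}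

/-- The Dirac measure at `a ∈ ℝ`, as a finite signed measure. -/
noncomputable def diracSM (a : ℝ) : SignedMeasure ℝ :=
  (MeasureTheory.Measure.dirac a).toSignedMeasure

/-- The difference quotient `h⁻¹ • (δ_{(1+h)t} − δ_t)` of `h ↦ δ_{(1+h)t}`. -/
noncomputable def diffQuot (t h : ℝ) : SignedMeasure ℝ :=
  h⁻¹ • (diracSM ((1 + h) * t) - diracSM t)

lemma integ {f : ℝ → ℝ} (hc : Continuous f) (hb : ∀ x, |f x| ≤ 1)
    (μ : Measure ℝ) [IsFiniteMeasure μ] : Integrable f μ :=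
  (integrable_const 1).mono' hc.aestronglyMeasurable
    (Filter.Eventually.of_forall (fun x => by simpa using hb x))

lemma sInt_eq (μ ν : Measure ℝ) [IsFiniteMeasure μ] [IsFiniteMeasure ν] {f : ℝ → ℝ}
    (hc : Continuous f) (hb : ∀ x, |f x| ≤ 1) :
    sInt (μ.toSignedMeasure - ν.toSignedMeasure) f = (∫ x, f x ∂μ) - ∫ x, f x ∂ν := by
  set s := μ.toSignedMeasure - ν.toSignedMeasure with hs
  have h1 : s.toJordanDecomposition.toSignedMeasure = s :=
    s.toSignedMeasure_toJordanDecomposition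
  rw [JordanDecomposition.toSignedMeasure] at h1
  have h2 : (s.toJordanDecomposition.posPart + ν).toSignedMeasure
      = (s.toJordanDecomposition.negPart + μ).toSignedMeasure := by
    rw [Measure.toSignedMeasure_add, Measure.toSignedMeasure_add]
    rw [hs] at h1
    linear_combination (norm := abel) h1
  have h3 : s.toJordanDecomposition.posPart + ν = s.toJordanDecomposition.negPart + μ :=
    (Measure.toSignedMeasure_eq_toSignedMeasure_iff).mp h2
  have h4 : (∫ x, f x ∂s.toJordanDecomposition.posPart) + ∫ x, f x ∂ν
      = (∫ x, f x ∂s.toJordanDecomposition.negPart) + ∫ x, f x ∂μ := by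
    rw [← integral_add_measure (integ hc hb _) (integ hc hb _),
      ← integral_add_measure (integ hc hb _) (integ hc hb _), h3]
  rw [sInt]
  linarith

/-- every signed measure is a difference of finite measures (its Jordan parts). -/
lemma jordan_rep (s : SignedMeasure ℝ) :
    s = s.toJordanDecomposition.posPart.toSignedMeasure -
        s.toJordanDecomposition.negPart.toSignedMeasure := by
  conv_lhs => rw [← s.toSignedMeasure_toJordanDecomposition]
  rfl

lemma sInt_add (σ τ : SignedMeasure ℝ) {f : ℝ → ℝ}
    (hc : Continuous f) (hb : ∀ x, |f x| ≤ 1) :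
    sInt (σ + τ) f = sInt σ f + sInt τ f := by
  have h : σ + τ =
      (σ.toJordanDecomposition.posPart + τ.toJordanDecomposition.posPart).toSignedMeasure -
      (σ.toJordanDecomposition.negPart + τ.toJordanDecomposition.negPart).toSignedMeasure := by
    rw [Measure.toSignedMeasure_add, Measure.toSignedMeasure_add]
    nth_rewrite 1 [jordan_rep σ, jordan_rep τ]
    abel
  rw [h, sInt_eq _ _ hc hb, integral_add_measure (integ hc hb _) (integ hc hb _),
    integral_add_measure (integ hc hb _) (integ hc hb _), sInt, sInt]
  ring

lemma sInt_neg (σ : SignedMeasure ℝ) {f : ℝ → ℝ}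
    (hc : Continuous f) (hb : ∀ x, |f x| ≤ 1) :
    sInt (-σ) f = -sInt σ f := by
  have h : -σ = σ.toJordanDecomposition.negPart.toSignedMeasure -
      σ.toJordanDecomposition.posPart.toSignedMeasure := by
    nth_rewrite 1 [jordan_rep σ]; abel
  rw [h, sInt_eq _ _ hc hb, sInt]
  ring

lemma sInt_bound (s : SignedMeasure ℝ) {f : ℝ → ℝ}
    (hc : Continuous f) (hb : ∀ x, |f x| ≤ 1) :
    sInt s f ≤ (s.toJordanDecomposition.posPart Set.univ).toReal +
      (s.toJordanDecomposition.negPart Set.univ).toReal := by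
  have h1 : ∀ (μ : Measure ℝ) [IsFiniteMeasure μ],
      |∫ x, f x ∂μ| ≤ (μ Set.univ).toReal := by
    intro μ _
    have := norm_integral_le_of_norm_le_const (μ := μ) (f := f) (C := 1)
      (Filter.Eventually.of_forall (fun x => by simpa using hb x))
    exact (by simpa using this : |∫ x, f x ∂μ| ≤ μ.real Set.univ)
  have h2 := h1 s.toJordanDecomposition.posPart
  have h3 := h1 s.toJordanDecomposition.negPart
  rw [sInt]
  have := abs_le.mp h2
  have := abs_le.mp h3
  cases abs_le.mp h2; cases abs_le.mp h3; linarith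

lemma flat_set_bddAbove (μ ν : SignedMeasure ℝ) :
    BddAbove {r : ℝ | ∃ f : ℝ → ℝ, (∀ x, |f x| ≤ 1) ∧ LipschitzWith 1 f ∧ r = sInt (μ - ν) f} := by
  refine ⟨((μ - ν).toJordanDecomposition.posPart Set.univ).toReal +
    ((μ - ν).toJordanDecomposition.negPart Set.univ).toReal, ?_⟩
  rintro r ⟨f, hb, hl, rfl⟩
  exact sInt_bound _ hl.continuous hb

lemma flat_set_nonempty (μ ν : SignedMeasure ℝ) :
    Set.Nonempty {r : ℝ | ∃ f : ℝ → ℝ, (∀ x, |f x| ≤ 1) ∧ LipschitzWith 1 f ∧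
      r = sInt (μ - ν) f} := by
  refine ⟨0, fun _ => 0, by norm_num, (LipschitzWith.const 0).weaken (zero_le_one), ?_⟩
  simp [sInt]

lemma sInt_negf (σ : SignedMeasure ℝ) (f : ℝ → ℝ) :
    sInt σ (fun x => -f x) = -sInt σ f := by
  simp only [sInt, integral_neg]; ring

lemma flatDist_comm (μ ν : SignedMeasure ℝ) : flatDist μ ν = flatDist ν μ := by
  have key : ∀ σ τ : SignedMeasure ℝ, ∀ f : ℝ → ℝ, (∀ x, |f x| ≤ 1) → LipschitzWith 1 f →
      sInt (σ - τ) f = sInt (τ - σ) (fun x => -f x) := by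
    intro σ τ f hb hl
    rw [sInt_negf]
    have : τ - σ = -(σ - τ) := by abel
    rw [this, sInt_neg _ hl.continuous hb, neg_neg]
  unfold flatDist
  congr 1
  ext r
  constructor
  · rintro ⟨f, hb, hl, rfl⟩
    exact ⟨-f, fun x => by simpa using hb x, hl.neg, key μ ν f hb hl⟩
  · rintro ⟨f, hb, hl, rfl⟩
    exact ⟨-f, fun x => by simpa using hb x, hl.neg, key ν μ f hb hl⟩

lemma flatDist_triangle (μ L ν : SignedMeasure ℝ) :
    flatDist μ ν ≤ flatDist μ L + flatDist L ν := by
  apply csSup_le (flat_set_nonempty μ ν)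
  rintro r ⟨f, hb, hl, rfl⟩
  have h : μ - ν = (μ - L) + (L - ν) := by abel
  rw [h, sInt_add _ _ hl.continuous hb]
  have h1 : sInt (μ - L) f ≤ flatDist μ L :=
    le_csSup (flat_set_bddAbove μ L) ⟨f, hb, hl, rfl⟩
  have h2 : sInt (L - ν) f ≤ flatDist L ν :=
    le_csSup (flat_set_bddAbove L ν) ⟨f, hb, hl, rfl⟩
  linarith

lemma nnsmul_eq (r : ℝ≥0) (s : SignedMeasure ℝ) : r • s = (r : ℝ) • s := by
  ext i hi
  simp [NNReal.smul_def]

lemma main_lb (t h₁ h₂ : ℝ) (ht : 0 < t) (hh₁ : 0 < h₁) (hh₁' : h₁ ≤ 1 / t)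
    (hh₂ : -(1 / t) ≤ h₂) (hh₂' : h₂ < 0) :
    2 * t ≤ flatDist (diffQuot t h₁) (diffQuot t h₂) := by
  have hc₁ : 0 < h₁⁻¹ := inv_pos.2 hh₁
  have hc₂ : 0 < (-h₂)⁻¹ := inv_pos.2 (by linarith)
  set a := (1 + h₁) * t with ha
  set b := (1 + h₂) * t with hbdef
  have rep : diffQuot t h₁ - diffQuot t h₂ =
      (h₁⁻¹.toNNReal • Measure.dirac a + (-h₂)⁻¹.toNNReal • Measure.dirac b).toSignedMeasure -
      ((h₁⁻¹ + (-h₂)⁻¹).toNNReal • Measure.dirac t).toSignedMeasure := by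
    rw [Measure.toSignedMeasure_add, Measure.toSignedMeasure_smul,
      Measure.toSignedMeasure_smul, Measure.toSignedMeasure_smul, nnsmul_eq, nnsmul_eq,
      nnsmul_eq, Real.coe_toNNReal _ hc₁.le, Real.coe_toNNReal _ hc₂.le,
      Real.coe_toNNReal _ (by linarith : (0:ℝ) ≤ h₁⁻¹ + (-h₂)⁻¹)]
    unfold diffQuot diracSM
    rw [inv_neg]
    module
  set f : ℝ → ℝ := fun x => min (dist x t) 1 with hf
  have hb : ∀ x, |f x| ≤ 1 := by
    intro x
    rw [abs_le]
    constructor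
    · have h0 : (0:ℝ) ≤ f x := le_min dist_nonneg zero_le_one
      linarith
    · exact min_le_right _ _
  have hl : LipschitzWith 1 f := (LipschitzWith.dist_left t).min_const 1
  have hft : f t = 0 := by simp [hf]
  have hfa : f a = h₁ * t := by
    have h1 : h₁ * t ≤ 1 := by
      rw [le_div_iff₀ ht] at hh₁'; linarith
    have h2 : a - t = h₁ * t := by rw [ha]; ring
    simp only [hf, Real.dist_eq, h2]
    rw [abs_of_nonneg (by positivity)]
    exact min_eq_left h1
  have hfb : f b = -(h₂ * t) := by
    have h1 : -(h₂ * t) ≤ 1 := by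
      have : -h₂ ≤ 1 / t := by linarith
      rw [le_div_iff₀ ht] at this; linarith
    have h2 : b - t = h₂ * t := by rw [hbdef]; ring
    simp only [hf, Real.dist_eq, h2]
    rw [abs_of_nonpos (by nlinarith)]
    exact min_eq_left h1
  have hint : ∀ (r : ℝ) (p : ℝ), 0 ≤ r →
      ∫ x, f x ∂((r.toNNReal : ℝ≥0) • Measure.dirac p) = r * f p := by
    intro r p hr
    rw [show ((r.toNNReal : ℝ≥0) • Measure.dirac p : Measure ℝ)
        = ((r.toNNReal : ℝ≥0∞) • Measure.dirac p) from rfl,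
      integral_smul_measure, integral_dirac]
    simp [Real.coe_toNNReal _ hr]
  have key : sInt (diffQuot t h₁ - diffQuot t h₂) f = 2 * t := by
    rw [rep, sInt_eq _ _ hl.continuous hb,
      integral_add_measure (integ hl.continuous hb _) (integ hl.continuous hb _),
      hint _ _ hc₁.le, hint _ _ hc₂.le,
      hint _ _ (by linarith : (0:ℝ) ≤ h₁⁻¹ + (-h₂)⁻¹), hft, hfa, hfb]
    have hh₁0 : h₁ ≠ 0 := ne_of_gt hh₁
    have hh₂0 : h₂ ≠ 0 := ne_of_lt hh₂'
    field_simp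
    ring
  exact le_csSup (flat_set_bddAbove _ _) ⟨f, hb, hl, key.symm⟩

/-- for `t > 0`, `0 < h₁ ≤ 1/t` and `−1/t ≤ h₂ < 0`, the difference
quotients of `h ↦ δ_{(1+h)t}` are at flat distance at least `2t`; consequently
`h ↦ δ_{(1+h)t}` is not differentiable at `h = 0` with respect to the flat metric. -/
theorem stmt1 (t h₁ h₂ : ℝ) (ht : 0 < t) (hh₁ : 0 < h₁) (hh₁' : h₁ ≤ 1 / t)
    (hh₂ : -(1 / t) ≤ h₂) (hh₂' : h₂ < 0) :
    2 * t ≤ flatDist (diffQuot t h₁) (diffQuot t h₂) ∧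
    ¬ ∃ L : SignedMeasure ℝ,
        Tendsto (fun h : ℝ => flatDist (diffQuot t h) L) (𝓝[≠] (0 : ℝ)) (𝓝 0) := by
  refine ⟨main_lb t h₁ h₂ ht hh₁ hh₁' hh₂ hh₂', ?_⟩
  rintro ⟨L, hL⟩
  rw [Metric.tendsto_nhdsWithin_nhds] at hL
  obtain ⟨δ, hδ, hδ'⟩ := hL (t / 2) (by linarith)
  set h : ℝ := min (δ / 2) (1 / t) with hh
  have ht' : 0 < 1 / t := by positivity
  have hpos : 0 < h := lt_min (by linarith) ht'
  have hle : h ≤ 1 / t := min_le_right _ _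
  have hdist : ∀ x : ℝ, x ≠ 0 → |x| < δ → flatDist (diffQuot t x) L < t / 2 := by
    intro x hx0 hxδ
    have := hδ' (x := x) hx0 (by simpa [Real.dist_eq] using hxδ)
    rw [Real.dist_eq] at this
    calc flatDist (diffQuot t x) L ≤ |flatDist (diffQuot t x) L - 0| := by
          rw [sub_zero]; exact le_abs_self _
      _ < t / 2 := this
  have habs : |h| < δ := by
    rw [abs_of_pos hpos]
    calc h ≤ δ / 2 := min_le_left _ _
      _ < δ := by linarith
  have habs' : |(-h)| < δ := by rwa [abs_neg]
  have hlb := main_lb t h (-h) ht hpos hle (by linarith) (by linarith)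
  have htri := flatDist_triangle (diffQuot t h) L (diffQuot t (-h))
  rw [flatDist_comm L (diffQuot t (-h))] at htri
  have h1 := hdist h (ne_of_gt hpos) habs
  have h2 := hdist (-h) (by simp [ne_of_gt hpos]) habs'
  linarith
end

section
/- Fix 0 < α ≤ 1, let u : ℝ → ℝ^m be three times continuously differentiable with u, u', u'', u''' bounded and u''' α-Hölder (i.e. u ∈ C^{3+α}), and let K be an admissible kernel. Then there exists a constant C ≥ 0, depending only on u, K, α and d, such that for every finite signed Borel measure μ on ℝ^d: ‖u∘k_μ‖_{C^{1+α}} ≤ C·(1 + ‖μ‖_* + ‖μ‖_*²). -/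
open MeasureTheory Set

/-- Integral of a Banach-space-valued function against a finite signed Borel
measure, via the Jordan decomposition. -/
noncomputable def sIntV {X : Type*} [MeasurableSpace X] {F : Type*}
    [NormedAddCommGroup F] [NormedSpace ℝ F]
    (μ : SignedMeasure X) (f : X → F) : F :=
  (∫ x, f x ∂μ.toJordanDecomposition.posPart) -
    ∫ x, f x ∂μ.toJordanDecomposition.negPart

/-- The `(C^{1+α})^*` dual norm of a finite signed Borel measure on `ℝ^d`. -/
noncomputable def dualNorm {d : ℕ} (α : ℝ)
    (μ : SignedMeasure (EuclideanSpace ℝ (Fin d))) : ℝ :=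
  sSup {r : ℝ | ∃ f : EuclideanSpace ℝ (Fin d) → ℝ, ContDiff ℝ 1 f ∧
    (∃ a b c : ℝ, a + b + c ≤ 1 ∧ (∀ x, |f x| ≤ a) ∧ (∀ x, ‖fderiv ℝ f x‖ ≤ b) ∧
      ∀ x y, ‖fderiv ℝ f x - fderiv ℝ f y‖ ≤ c * ‖x - y‖ ^ α) ∧
    r = sIntV μ f}

/-- `f` belongs to `C^{1+α}` with `‖f‖_{C^{1+α}} ≤ B`. -/
def MemC1aLE {E F : Type*} [NormedAddCommGroup E] [NormedSpace ℝ E]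
    [NormedAddCommGroup F] [NormedSpace ℝ F] (α : ℝ) (f : E → F) (B : ℝ) : Prop :=
  ContDiff ℝ 1 f ∧ ∃ a b c : ℝ, a + b + c ≤ B ∧ (∀ x, ‖f x‖ ≤ a) ∧
    (∀ x, ‖fderiv ℝ f x‖ ≤ b) ∧
    ∀ x y, ‖fderiv ℝ f x - fderiv ℝ f y‖ ≤ c * ‖x - y‖ ^ α

section Aux

theorem MemC1aLE.mono' {E F : Type*} [NormedAddCommGroup E] [NormedSpace ℝ E]
    [NormedAddCommGroup F] [NormedSpace ℝ F] {α B B' : ℝ} {f : E → F}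
    (h : MemC1aLE α f B) (hBB' : B ≤ B') : MemC1aLE α f B' := by
  obtain ⟨h1, a, b, c, habc, h2⟩ := h
  exact ⟨h1, a, b, c, habc.trans hBB', h2⟩

theorem MemC1aLE.comp_clm {E F G : Type*} [NormedAddCommGroup E] [NormedSpace ℝ E]
    [NormedAddCommGroup F] [NormedSpace ℝ F] [NormedAddCommGroup G] [NormedSpace ℝ G]
    {α B : ℝ} {f : E → F} (h : MemC1aLE α f B) (L : F →L[ℝ] G) :
    MemC1aLE α (fun x => L (f x)) (‖L‖ * B) := by
  obtain ⟨h1, a, b, c, habc, ha, hb, hc⟩ := h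
  have hdf : Differentiable ℝ f := h1.differentiable one_ne_zero
  have hfd : ∀ x, fderiv ℝ (fun x => L (f x)) x = L.comp (fderiv ℝ f x) := fun x =>
    (L.hasFDerivAt.comp x (hdf x).hasFDerivAt).fderiv
  refine ⟨L.contDiff.comp h1, ‖L‖ * a, ‖L‖ * b, ‖L‖ * c, ?_, ?_, ?_, ?_⟩
  · calc ‖L‖ * a + ‖L‖ * b + ‖L‖ * c = ‖L‖ * (a + b + c) := by ring
      _ ≤ ‖L‖ * B := mul_le_mul_of_nonneg_left habc (norm_nonneg L)
  · intro x
    exact (L.le_opNorm _).trans (mul_le_mul_of_nonneg_left (ha x) (norm_nonneg L))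
  · intro x
    rw [hfd]
    exact (L.opNorm_comp_le _).trans (mul_le_mul_of_nonneg_left (hb x) (norm_nonneg L))
  · intro x y
    rw [hfd, hfd]
    have : L.comp (fderiv ℝ f x) - L.comp (fderiv ℝ f y)
        = L.comp (fderiv ℝ f x - fderiv ℝ f y) := by ext v; simp
    rw [this, mul_assoc]
    exact (L.opNorm_comp_le _).trans (mul_le_mul_of_nonneg_left (hc x y) (norm_nonneg L))

theorem zero_mem_dualSet {d : ℕ} (α : ℝ) (μ : SignedMeasure (EuclideanSpace ℝ (Fin d))) :
    (0 : ℝ) ∈ {r : ℝ | ∃ f : EuclideanSpace ℝ (Fin d) → ℝ, ContDiff ℝ 1 f ∧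
    (∃ a b c : ℝ, a + b + c ≤ 1 ∧ (∀ x, |f x| ≤ a) ∧ (∀ x, ‖fderiv ℝ f x‖ ≤ b) ∧
      ∀ x y, ‖fderiv ℝ f x - fderiv ℝ f y‖ ≤ c * ‖x - y‖ ^ α) ∧
    r = sIntV μ f} := by
  refine ⟨fun _ => 0, contDiff_const, ⟨0, 0, 0, by norm_num, by simp, by simp, by simp⟩, ?_⟩
  simp [sIntV]

theorem dualNorm_nonneg {d : ℕ} (α : ℝ) (μ : SignedMeasure (EuclideanSpace ℝ (Fin d))) :
    0 ≤ dualNorm α μ := by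
  by_cases h : BddAbove {r : ℝ | ∃ f : EuclideanSpace ℝ (Fin d) → ℝ, ContDiff ℝ 1 f ∧
    (∃ a b c : ℝ, a + b + c ≤ 1 ∧ (∀ x, |f x| ≤ a) ∧ (∀ x, ‖fderiv ℝ f x‖ ≤ b) ∧
      ∀ x y, ‖fderiv ℝ f x - fderiv ℝ f y‖ ≤ c * ‖x - y‖ ^ α) ∧
    r = sIntV μ f}
  · exact le_csSup h (zero_mem_dualSet α μ)
  · unfold dualNorm
    rw [Real.sSup_of_not_bddAbove h]

theorem holder_coeff_nonneg {d : ℕ} (hd : 0 < d) {F : Type*} [NormedAddCommGroup F]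
    {α : ℝ} {c : ℝ} {D : EuclideanSpace ℝ (Fin d) → F}
    (hc : ∀ x y, ‖D x - D y‖ ≤ c * ‖x - y‖ ^ α) : 0 ≤ c := by
  set i : Fin d := ⟨0, hd⟩
  have h1 : ‖(0 : EuclideanSpace ℝ (Fin d)) - EuclideanSpace.single i (1:ℝ)‖ = 1 := by
    rw [zero_sub, norm_neg, EuclideanSpace.norm_single, norm_one]
  have := (norm_nonneg _).trans (hc 0 (EuclideanSpace.single i 1))
  rw [h1, Real.one_rpow, mul_one] at this
  exact this

theorem MemC1aLE.norm_le {d : ℕ} (hd : 0 < d) {F : Type*} [NormedAddCommGroup F]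
    [NormedSpace ℝ F] {α B : ℝ} {f : EuclideanSpace ℝ (Fin d) → F}
    (h : MemC1aLE α f B) (x : EuclideanSpace ℝ (Fin d)) : ‖f x‖ ≤ B := by
  obtain ⟨h1, a, b, c, habc, ha, hb, hc⟩ := h
  have hb0 : 0 ≤ b := (norm_nonneg _).trans (hb 0)
  have hc0 : 0 ≤ c := holder_coeff_nonneg hd hc
  have := ha x
  linarith

theorem bddAbove_dualSet {d : ℕ} (hd : 0 < d) (α : ℝ)
    (μ : SignedMeasure (EuclideanSpace ℝ (Fin d))) :
    BddAbove {r : ℝ | ∃ f : EuclideanSpace ℝ (Fin d) → ℝ, ContDiff ℝ 1 f ∧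
    (∃ a b c : ℝ, a + b + c ≤ 1 ∧ (∀ x, |f x| ≤ a) ∧ (∀ x, ‖fderiv ℝ f x‖ ≤ b) ∧
      ∀ x y, ‖fderiv ℝ f x - fderiv ℝ f y‖ ≤ c * ‖x - y‖ ^ α) ∧
    r = sIntV μ f} := by
  set ν₁ := μ.toJordanDecomposition.posPart
  set ν₂ := μ.toJordanDecomposition.negPart
  refine ⟨(ν₁ univ).toReal + (ν₂ univ).toReal, ?_⟩
  rintro r ⟨f, hf1, ⟨a, b, c, habc, ha, hb, hc⟩, rfl⟩
  have ha0 : 0 ≤ a := (abs_nonneg _).trans (ha 0)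
  have hb0 : 0 ≤ b := (norm_nonneg _).trans (hb 0)
  have hc0 : 0 ≤ c := holder_coeff_nonneg hd hc
  have ha1 : a ≤ 1 := by linarith
  have key : ∀ ν : Measure (EuclideanSpace ℝ (Fin d)), IsFiniteMeasure ν →
      ‖∫ x, f x ∂ν‖ ≤ (ν univ).toReal := by
    intro ν hν
    calc ‖∫ x, f x ∂ν‖ ≤ a * (ν univ).toReal :=
          norm_integral_le_of_norm_le_const (Filter.Eventually.of_forall fun x => by
            rw [Real.norm_eq_abs]; exact ha x)
      _ ≤ 1 * (ν univ).toReal := mul_le_mul_of_nonneg_right ha1 ENNReal.toReal_nonneg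
      _ = (ν univ).toReal := one_mul _
  have h1 := key ν₁ inferInstance
  have h2 := key ν₂ inferInstance
  rw [Real.norm_eq_abs, abs_le] at h1 h2
  simp only [sIntV]
  linarith [h1.2, h2.1]

theorem sIntV_le_dualNorm {d : ℕ} (hd : 0 < d) {α : ℝ}
    (μ : SignedMeasure (EuclideanSpace ℝ (Fin d))) {f : EuclideanSpace ℝ (Fin d) → ℝ} {B : ℝ}
    (hB : 0 < B) (hf : ContDiff ℝ 1 f)
    (hex : ∃ a b c : ℝ, a + b + c ≤ B ∧ (∀ x, |f x| ≤ a) ∧ (∀ x, ‖fderiv ℝ f x‖ ≤ b) ∧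
      ∀ x y, ‖fderiv ℝ f x - fderiv ℝ f y‖ ≤ c * ‖x - y‖ ^ α) :
    sIntV μ f ≤ B * dualNorm α μ := by
  obtain ⟨a, b, c, habc, ha, hb, hc⟩ := hex
  have hdf : Differentiable ℝ f := hf.differentiable one_ne_zero
  have hmem : B⁻¹ * sIntV μ f ∈ {r : ℝ | ∃ f : EuclideanSpace ℝ (Fin d) → ℝ, ContDiff ℝ 1 f ∧
      (∃ a b c : ℝ, a + b + c ≤ 1 ∧ (∀ x, |f x| ≤ a) ∧ (∀ x, ‖fderiv ℝ f x‖ ≤ b) ∧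
        ∀ x y, ‖fderiv ℝ f x - fderiv ℝ f y‖ ≤ c * ‖x - y‖ ^ α) ∧
      r = sIntV μ f} := by
    refine ⟨fun x => B⁻¹ • f x, hf.const_smul B⁻¹, ⟨B⁻¹ * a, B⁻¹ * b, B⁻¹ * c, ?_, ?_, ?_, ?_⟩, ?_⟩
    · calc B⁻¹ * a + B⁻¹ * b + B⁻¹ * c = B⁻¹ * (a + b + c) := by ring
        _ ≤ B⁻¹ * B := mul_le_mul_of_nonneg_left habc (inv_nonneg.mpr hB.le)
        _ = 1 := inv_mul_cancel₀ hB.ne'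
    · intro x
      simp only [smul_eq_mul, abs_mul, abs_inv, abs_of_pos hB]
      exact mul_le_mul_of_nonneg_left (ha x) (inv_nonneg.mpr hB.le)
    · intro x
      rw [fderiv_fun_const_smul (hdf x), norm_smul, norm_inv, Real.norm_eq_abs, abs_of_pos hB]
      exact mul_le_mul_of_nonneg_left (hb x) (inv_nonneg.mpr hB.le)
    · intro x y
      rw [fderiv_fun_const_smul (hdf x), fderiv_fun_const_smul (hdf y), ← smul_sub, norm_smul,
        norm_inv, Real.norm_eq_abs, abs_of_pos hB, mul_assoc]
      exact mul_le_mul_of_nonneg_left (hc x y) (inv_nonneg.mpr hB.le)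
    · simp only [sIntV, smul_eq_mul, integral_const_mul]
      ring
  have hle : B⁻¹ * sIntV μ f ≤ dualNorm α μ := le_csSup (bddAbove_dualSet hd α μ) hmem
  calc sIntV μ f = B * (B⁻¹ * sIntV μ f) := by field_simp
    _ ≤ B * dualNorm α μ := mul_le_mul_of_nonneg_left hle hB.le

theorem abs_sIntV_le {d : ℕ} (hd : 0 < d) {α : ℝ}
    (μ : SignedMeasure (EuclideanSpace ℝ (Fin d))) {f : EuclideanSpace ℝ (Fin d) → ℝ} {B : ℝ}
    (hB : 0 ≤ B) (hf : MemC1aLE α f B) : |sIntV μ f| ≤ B * dualNorm α μ := by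
  obtain ⟨hf1, a, b, c, habc, ha, hb, hc⟩ := hf
  rcases eq_or_lt_of_le hB with hB0 | hBpos
  · have ha0 : 0 ≤ a := (norm_nonneg (f 0)).trans (ha 0)
    have hb0 : 0 ≤ b := (norm_nonneg _).trans (hb 0)
    have hc0 : 0 ≤ c := holder_coeff_nonneg hd hc
    have hf0 : ∀ x, f x = 0 := by
      intro x
      have h := ha x
      have : ‖f x‖ ≤ 0 := by linarith
      simpa using this
    have : f = fun _ => (0:ℝ) := funext hf0
    rw [this]
    simp [sIntV, ← hB0]
  · have h1 : sIntV μ f ≤ B * dualNorm α μ :=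
      sIntV_le_dualNorm hd μ hBpos hf1
        ⟨a, b, c, habc, fun x => (Real.norm_eq_abs (f x)) ▸ ha x, hb, hc⟩
    have h2 : sIntV μ (fun x => -f x) ≤ B * dualNorm α μ := by
      refine sIntV_le_dualNorm hd μ hBpos hf1.neg ⟨a, b, c, habc, ?_, ?_, ?_⟩
      · intro x; rw [abs_neg, ← Real.norm_eq_abs]; exact ha x
      · intro x; rw [fderiv_fun_neg, norm_neg]; exact hb x
      · intro x y
        rw [fderiv_fun_neg, fderiv_fun_neg, neg_sub_neg, norm_sub_rev]
        exact hc x y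
    have hneg : sIntV μ (fun x => -f x) = -sIntV μ f := by
      simp [sIntV, integral_neg]; ring
    rw [hneg] at h2
    rw [abs_le]
    constructor <;> linarith

theorem measurable_param_fderiv {d : ℕ}
    {K : EuclideanSpace ℝ (Fin d) → EuclideanSpace ℝ (Fin d) → ℝ}
    (hKmeas : Measurable fun p : EuclideanSpace ℝ (Fin d) × EuclideanSpace ℝ (Fin d) => K p.1 p.2)
    (hKdiff : ∀ y, Differentiable ℝ (fun x => K y x)) (x₀ : EuclideanSpace ℝ (Fin d)) :
    Measurable fun y => fderiv ℝ (fun x => K y x) x₀ := by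
  have hslice : ∀ z : EuclideanSpace ℝ (Fin d), Measurable fun y => K y z := fun z =>
    hKmeas.comp (measurable_id.prodMk measurable_const)
  have hgi : ∀ v : EuclideanSpace ℝ (Fin d),
      Measurable fun y => fderiv ℝ (fun x => K y x) x₀ v := by
    intro v
    apply measurable_of_tendsto_metrizable
      (f := fun n y => ((n : ℝ)) • (K y (x₀ + ((n : ℝ))⁻¹ • v) - K y x₀))
    · intro n
      exact (((hslice _).sub (hslice _)).const_smul ((n : ℝ)))
    · rw [tendsto_pi_nhds]
      intro y
      refine HasFDerivAt.lim ((hKdiff y x₀).hasFDerivAt) v ?_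
      simp only [Real.norm_natCast]
      exact tendsto_natCast_atTop_atTop
  have hrepr : (fun y => fderiv ℝ (fun x => K y x) x₀) = fun y =>
      ∑ i : Fin d, (fderiv ℝ (fun x => K y x) x₀ (EuclideanSpace.basisFun (Fin d) ℝ i)) •
        (EuclideanSpace.proj i : EuclideanSpace ℝ (Fin d) →L[ℝ] ℝ) := by
    funext y
    apply ContinuousLinearMap.ext
    intro w
    have hw := (EuclideanSpace.basisFun (Fin d) ℝ).sum_repr w
    rw [ContinuousLinearMap.sum_apply]
    conv_lhs => rw [← hw]
    rw [map_sum]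
    refine Finset.sum_congr rfl fun i _ => ?_
    rw [_root_.map_smul, ContinuousLinearMap.smul_apply]
    simp [EuclideanSpace.basisFun_repr, PiLp.proj_apply, smul_eq_mul, mul_comm]
  rw [hrepr]
  exact Finset.measurable_sum _ fun i _ => (hgi _).smul_const _

theorem hasFDerivAt_int_measure {d : ℕ}
    {K : EuclideanSpace ℝ (Fin d) → EuclideanSpace ℝ (Fin d) → ℝ}
    (hKmeas : Measurable fun p : EuclideanSpace ℝ (Fin d) × EuclideanSpace ℝ (Fin d) => K p.1 p.2)
    (hKdiff : ∀ y, Differentiable ℝ (fun x => K y x))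
    {MKb M'Kb : ℝ} (hKb : ∀ y x, ‖K y x‖ ≤ MKb)
    (hK'b : ∀ y x, ‖fderiv ℝ (fun x' => K y x') x‖ ≤ M'Kb)
    (ν : Measure (EuclideanSpace ℝ (Fin d))) [IsFiniteMeasure ν] (x₀ : EuclideanSpace ℝ (Fin d)) :
    HasFDerivAt (fun x => ∫ y, K y x ∂ν) (∫ y, fderiv ℝ (fun x' => K y x') x₀ ∂ν) x₀ := by
  have hslice : ∀ z : EuclideanSpace ℝ (Fin d), Measurable fun y => K y z := fun z =>
    hKmeas.comp (measurable_id.prodMk measurable_const)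
  apply hasFDerivAt_integral_of_dominated_of_fderiv_le (F := fun x y => K y x)
    (F' := fun x y => fderiv ℝ (fun x' => K y x') x) (bound := fun _ => M'Kb) Filter.univ_mem
  · exact Filter.Eventually.of_forall fun x => (hslice x).aestronglyMeasurable
  · exact (integrable_const MKb).mono' (hslice x₀).aestronglyMeasurable
      (Filter.Eventually.of_forall fun y => hKb y x₀)
  · exact (measurable_param_fderiv hKmeas hKdiff x₀).aestronglyMeasurable
  · exact Filter.Eventually.of_forall fun y x _ => hK'b y x
  · exact integrable_const M'Kb
  · exact Filter.Eventually.of_forall fun y x _ => ((hKdiff y) x).hasFDerivAt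

theorem continuous_of_holder_bound {E F : Type*} [NormedAddCommGroup E] [NormedSpace ℝ E]
    [NormedAddCommGroup F] {f : E → F} {C α : ℝ} (hα : 0 < α)
    (h : ∀ x y, ‖f x - f y‖ ≤ C * ‖x - y‖ ^ α) : Continuous f := by
  rw [continuous_iff_continuousAt]
  intro x₀
  have h0 : Filter.Tendsto (fun y => C * ‖y - x₀‖ ^ α) (nhds x₀) (nhds 0) := by
    have h1 : Filter.Tendsto (fun y : E => ‖y - x₀‖) (nhds x₀) (nhds 0) := by
      have hcont : Continuous fun y : E => ‖y - x₀‖ :=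
        (continuous_id.sub continuous_const).norm
      have := hcont.continuousAt (x := x₀)
      simpa [ContinuousAt] using this
    have h2 : Filter.Tendsto (fun t : ℝ => C * t ^ α) (nhds 0) (nhds 0) := by
      have h3 : Filter.Tendsto (fun t : ℝ => t ^ α) (nhds 0) (nhds ((0:ℝ) ^ α)) :=
        (Real.continuousAt_rpow_const 0 α (Or.inr hα.le))
      rw [Real.zero_rpow hα.ne'] at h3
      simpa using h3.const_mul C
    exact h2.comp h1
  have hsub : Filter.Tendsto (fun y => f y - f x₀) (nhds x₀) (nhds 0) :=
    squeeze_zero_norm (fun y => h y x₀) h0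
  have := hsub.add_const (f x₀)
  simp at this; exact this

end Aux

set_option maxHeartbeats 2000000 in
/-- for `u ∈ C^{3+α}(ℝ; ℝ^m)` (with `u, u', u'', u'''` bounded and
`u'''` `α`-Hölder) and an admissible kernel `K`, there is a constant `C ≥ 0`,
depending only on `u`, `K`, `α` and `d`, such that for every finite signed
Borel measure `μ` on `ℝ^d`:
`‖u ∘ k_μ‖_{C^{1+α}} ≤ C(1 + ‖μ‖_* + ‖μ‖_*²)`. -/
theorem stmt9 {d m : ℕ} (α : ℝ) (hα : 0 < α) (hα1 : α ≤ 1)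
    (u : ℝ → EuclideanSpace ℝ (Fin m)) (hu : ContDiff ℝ 3 u)
    (Mu : ℕ → ℝ) (hMu : ∀ k ≤ 3, ∀ x, ‖iteratedDeriv k u x‖ ≤ Mu k)
    (Hu : ℝ) (hHu : ∀ x y, ‖iteratedDeriv 3 u x - iteratedDeriv 3 u y‖ ≤ Hu * |x - y| ^ α)
    (K : EuclideanSpace ℝ (Fin d) → EuclideanSpace ℝ (Fin d) → ℝ)
    (hKmeas : Measurable fun p : EuclideanSpace ℝ (Fin d) × EuclideanSpace ℝ (Fin d) =>
      K p.1 p.2)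
    (hKdiff : ∀ y, Differentiable ℝ (fun x => K y x))
    (MK M'K HK : ℝ)
    (hMK : ∀ x, MemC1aLE α (fun y => K y x) MK)
    (hM'K : ∀ x, MemC1aLE α (fun y => fderiv ℝ (fun x' => K y x') x) M'K)
    (hHK : ∀ x₁ x₂, MemC1aLE α
      (fun y => fderiv ℝ (fun x' => K y x') x₁ - fderiv ℝ (fun x' => K y x') x₂)
      (HK * ‖x₁ - x₂‖ ^ α)) :
    ∃ C : ℝ, 0 ≤ C ∧ ∀ μ : SignedMeasure (EuclideanSpace ℝ (Fin d)),
      MemC1aLE α (fun x => u (sIntV μ (fun y => K y x)))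
        (C * (1 + dualNorm α μ + dualNorm α μ ^ 2)) := by
  have hMu0 : 0 ≤ Mu 0 := (norm_nonneg _).trans (hMu 0 (by norm_num) 0)
  have hMu1 : 0 ≤ Mu 1 := (norm_nonneg _).trans (hMu 1 (by norm_num) 0)
  have hMu2 : 0 ≤ Mu 2 := (norm_nonneg _).trans (hMu 2 (by norm_num) 0)
  have hud : Differentiable ℝ u := hu.differentiable (by norm_num)
  have ha0 : ∀ t, ‖u t‖ ≤ Mu 0 := by
    intro t; have := hMu 0 (by norm_num) t; rwa [iteratedDeriv_zero] at this
  rcases Nat.eq_zero_or_pos d with hd0 | hd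
  · subst hd0
    refine ⟨Mu 0, hMu0, fun μ => ?_⟩
    have hconst : (fun x : EuclideanSpace ℝ (Fin 0) => u (sIntV μ fun y => K y x)) =
        fun _ => u (sIntV μ fun y => K y 0) := by
      funext x
      rw [Subsingleton.elim x 0]
    rw [hconst]
    have hN := dualNorm_nonneg α μ
    have hN2 : 0 ≤ dualNorm α μ ^ 2 := sq_nonneg _
    refine ⟨contDiff_const, Mu 0, 0, 0, ?_, fun x => ha0 _, ?_, ?_⟩
    · nlinarith
    · intro x; rw [fderiv_fun_const]; simp
    · intro x y; rw [fderiv_fun_const]; simp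
  -- main case
  -- enlarged constants
  set MK' := max MK 1 with hMK'def
  set M'K' := max M'K 1 with hM'K'def
  set HK' := max HK 1 with hHK'def
  have hMK'pos : (0:ℝ) < MK' := lt_of_lt_of_le one_pos (le_max_right _ _)
  have hM'K'pos : (0:ℝ) < M'K' := lt_of_lt_of_le one_pos (le_max_right _ _)
  have hHK'pos : (0:ℝ) < HK' := lt_of_lt_of_le one_pos (le_max_right _ _)
  have hMK' : ∀ x, MemC1aLE α (fun y => K y x) MK' := fun x =>
    (hMK x).mono' (le_max_left _ _)
  have hM'K' : ∀ x, MemC1aLE α (fun y => fderiv ℝ (fun x' => K y x') x) M'K' := fun x =>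
    (hM'K x).mono' (le_max_left _ _)
  have hHK' : ∀ x₁ x₂, MemC1aLE α
      (fun y => fderiv ℝ (fun x' => K y x') x₁ - fderiv ℝ (fun x' => K y x') x₂)
      (HK' * ‖x₁ - x₂‖ ^ α) := fun x₁ x₂ =>
    (hHK x₁ x₂).mono' (mul_le_mul_of_nonneg_right (le_max_left _ _)
      (Real.rpow_nonneg (norm_nonneg _) α))
  have hKb : ∀ y x, ‖K y x‖ ≤ MK' := fun y x => (hMK' x).norm_le hd y
  have hK'b : ∀ y x, ‖fderiv ℝ (fun x' => K y x') x‖ ≤ M'K' := fun y x =>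
    (hM'K' x).norm_le hd y
  -- constant
  refine ⟨Mu 0 + Mu 1 * M'K' + Mu 1 * HK' + Mu 2 * ((M'K' + 2 * MK') * M'K'), by positivity,
    fun μ => ?_⟩
  set N := dualNorm α μ with hNdef
  have hN : 0 ≤ N := dualNorm_nonneg α μ
  set ν₁ := μ.toJordanDecomposition.posPart with hν₁def
  set ν₂ := μ.toJordanDecomposition.negPart with hν₂def
  set k : EuclideanSpace ℝ (Fin d) → ℝ := fun x => sIntV μ (fun y => K y x) with hkdef
  set k' : EuclideanSpace ℝ (Fin d) → (EuclideanSpace ℝ (Fin d) →L[ℝ] ℝ) := fun x =>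
    sIntV μ (fun y => fderiv ℝ (fun x' => K y x') x) with hk'def
  have hkderiv : ∀ x, HasFDerivAt k (k' x) x := by
    intro x
    exact (hasFDerivAt_int_measure hKmeas hKdiff hKb hK'b ν₁ x).sub
      (hasFDerivAt_int_measure hKmeas hKdiff hKb hK'b ν₂ x)
  have hkb : ∀ x, |k x| ≤ MK' * N := fun x => abs_sIntV_le hd μ hMK'pos.le (hMK' x)
  -- integrability of CLM-valued integrand
  have hint : ∀ x (ν : Measure (EuclideanSpace ℝ (Fin d))), IsFiniteMeasure ν →
      Integrable (fun y => fderiv ℝ (fun x' => K y x') x) ν := by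
    intro x ν hν
    exact (integrable_const M'K').mono'
      (measurable_param_fderiv hKmeas hKdiff x).aestronglyMeasurable
      (Filter.Eventually.of_forall fun y => hK'b y x)
  have hLv : ∀ v : EuclideanSpace ℝ (Fin d),
      ‖(ContinuousLinearMap.apply ℝ ℝ v : (EuclideanSpace ℝ (Fin d) →L[ℝ] ℝ) →L[ℝ] ℝ)‖ ≤ ‖v‖ := by
    intro v
    refine ContinuousLinearMap.opNorm_le_bound _ (norm_nonneg v) fun T => ?_
    rw [ContinuousLinearMap.apply_apply, mul_comm]
    exact T.le_opNorm v
  have hk'apply : ∀ x v, (k' x) v = sIntV μ (fun y => fderiv ℝ (fun x' => K y x') x v) := by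
    intro x v
    simp only [hk'def, sIntV, ContinuousLinearMap.sub_apply]
    rw [ContinuousLinearMap.integral_apply (hint x ν₁ inferInstance) v,
      ContinuousLinearMap.integral_apply (hint x ν₂ inferInstance) v]
  have hk'b : ∀ x, ‖k' x‖ ≤ M'K' * N := by
    intro x
    refine ContinuousLinearMap.opNorm_le_bound _ (by positivity) fun v => ?_
    rw [hk'apply x v]
    have hmem : MemC1aLE α (fun y => fderiv ℝ (fun x' => K y x') x v) (‖v‖ * M'K') := by
      have := (hM'K' x).comp_clm (ContinuousLinearMap.apply ℝ ℝ v)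
      simp only [ContinuousLinearMap.apply_apply] at this
      exact this.mono' (mul_le_mul_of_nonneg_right (hLv v) hM'K'pos.le)
    calc |sIntV μ fun y => fderiv ℝ (fun x' => K y x') x v| ≤ ‖v‖ * M'K' * N :=
          abs_sIntV_le hd μ (by positivity) hmem
      _ = M'K' * N * ‖v‖ := by ring
  have hk'h : ∀ x₁ x₂, ‖k' x₁ - k' x₂‖ ≤ HK' * N * ‖x₁ - x₂‖ ^ α := by
    intro x₁ x₂
    have hrp : (0:ℝ) ≤ ‖x₁ - x₂‖ ^ α := Real.rpow_nonneg (norm_nonneg _) α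
    refine ContinuousLinearMap.opNorm_le_bound _ (by positivity) fun v => ?_
    have happ : (k' x₁ - k' x₂) v = sIntV μ
        (fun y => (fderiv ℝ (fun x' => K y x') x₁ - fderiv ℝ (fun x' => K y x') x₂) v) := by
      rw [ContinuousLinearMap.sub_apply, hk'apply x₁ v, hk'apply x₂ v]
      have hi : ∀ (x : EuclideanSpace ℝ (Fin d)) (ν : Measure (EuclideanSpace ℝ (Fin d))),
          IsFiniteMeasure ν →
          Integrable (fun y => fderiv ℝ (fun x' => K y x') x v) ν := by
        intro x ν hν
        exact ((hint x ν hν).apply_continuousLinearMap v)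
      simp only [sIntV, ContinuousLinearMap.sub_apply]
      rw [integral_sub (hi x₁ ν₁ inferInstance) (hi x₂ ν₁ inferInstance),
        integral_sub (hi x₁ ν₂ inferInstance) (hi x₂ ν₂ inferInstance)]
      ring
    rw [happ]
    have hmem : MemC1aLE α
        (fun y => (fderiv ℝ (fun x' => K y x') x₁ - fderiv ℝ (fun x' => K y x') x₂) v)
        (‖v‖ * (HK' * ‖x₁ - x₂‖ ^ α)) := by
      have := (hHK' x₁ x₂).comp_clm (ContinuousLinearMap.apply ℝ ℝ v)
      simp only [ContinuousLinearMap.apply_apply] at this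
      exact this.mono' (mul_le_mul_of_nonneg_right (hLv v) (by positivity))
    calc |sIntV μ fun y =>
          (fderiv ℝ (fun x' => K y x') x₁ - fderiv ℝ (fun x' => K y x') x₂) v|
        ≤ ‖v‖ * (HK' * ‖x₁ - x₂‖ ^ α) * N := abs_sIntV_le hd μ (by positivity) hmem
      _ = HK' * N * ‖x₁ - x₂‖ ^ α * ‖v‖ := by ring
  have hkdiff : Differentiable ℝ k := fun x => (hkderiv x).differentiableAt
  have hkfderiv : ∀ x, fderiv ℝ k x = k' x := fun x => (hkderiv x).fderiv
  have hk'cont : Continuous k' := continuous_of_holder_bound hα hk'h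
  have hk1 : ContDiff ℝ 1 k := by
    rw [contDiff_one_iff_fderiv]
    refine ⟨hkdiff, ?_⟩
    have : fderiv ℝ k = k' := funext hkfderiv
    rw [this]
    exact hk'cont
  have hkLip : ∀ x₁ x₂, |k x₁ - k x₂| ≤ M'K' * N * ‖x₁ - x₂‖ := by
    intro x₁ x₂
    rw [← Real.norm_eq_abs]
    exact convex_univ.norm_image_sub_le_of_norm_fderiv_le (fun x _ => hkdiff x)
      (fun x _ => by rw [hkfderiv]; exact hk'b x) (mem_univ x₂) (mem_univ x₁)
  -- u facts
  have hu2 : ContDiff ℝ ((1:ℕ) + 1) u := hu.of_le (by norm_num)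
  have hdu := contDiff_succ_iff_deriv.mp hu2
  have hdud : Differentiable ℝ (deriv u) := hdu.2.2.differentiable (by simp)
  have hu'bd : ∀ t, ‖deriv u t‖ ≤ Mu 1 := fun t => by
    have := hMu 1 (by norm_num) t; rwa [iteratedDeriv_one] at this
  have hu''bd : ∀ t, ‖deriv (deriv u) t‖ ≤ Mu 2 := fun t => by
    have := hMu 2 (by norm_num) t
    rwa [iteratedDeriv_succ, iteratedDeriv_one] at this
  have hu'lip : ∀ s t, ‖deriv u s - deriv u t‖ ≤ Mu 2 * ‖s - t‖ := fun s t =>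
    convex_univ.norm_image_sub_le_of_norm_deriv_le (fun x _ => hdud x)
      (fun x _ => hu''bd x) (mem_univ t) (mem_univ s)
  have hfd_u : ∀ t, fderiv ℝ u t
      = ContinuousLinearMap.smulRight (1 : ℝ →L[ℝ] ℝ) (deriv u t) := fun t =>
    ((hud t).hasDerivAt.hasFDerivAt).fderiv
  have hfd_u_norm : ∀ t, ‖fderiv ℝ u t‖ = ‖deriv u t‖ := by
    intro t
    rw [hfd_u t]
    simp only [ContinuousLinearMap.norm_smulRight_apply, norm_one, one_mul]
  have hfd_u_sub : ∀ s t, ‖fderiv ℝ u s - fderiv ℝ u t‖ = ‖deriv u s - deriv u t‖ := by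
    intro s t
    rw [hfd_u s, hfd_u t]
    have : ContinuousLinearMap.smulRight (1 : ℝ →L[ℝ] ℝ) (deriv u s)
        - ContinuousLinearMap.smulRight (1 : ℝ →L[ℝ] ℝ) (deriv u t)
        = ContinuousLinearMap.smulRight (1 : ℝ →L[ℝ] ℝ) (deriv u s - deriv u t) := by
      apply ContinuousLinearMap.ext; intro v
      simp [smul_sub]
    rw [this]
    simp only [ContinuousLinearMap.norm_smulRight_apply, norm_one, one_mul]
  -- Hoelder bound on k
  have khol : ∀ x₁ x₂, |k x₁ - k x₂| ≤ (M'K' + 2 * MK') * N * ‖x₁ - x₂‖ ^ α := by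
    intro x₁ x₂
    by_cases h0 : x₁ = x₂
    · subst h0
      simp [sub_self, Real.zero_rpow hα.ne']
    have hΔpos : 0 < ‖x₁ - x₂‖ := by
      rw [norm_pos_iff]
      exact sub_ne_zero.mpr h0
    have hrp : (0:ℝ) ≤ ‖x₁ - x₂‖ ^ α := Real.rpow_nonneg (norm_nonneg _) α
    by_cases hle : ‖x₁ - x₂‖ ≤ 1
    · have h1 : ‖x₁ - x₂‖ ≤ ‖x₁ - x₂‖ ^ α := by
        calc ‖x₁ - x₂‖ = ‖x₁ - x₂‖ ^ (1:ℝ) := (Real.rpow_one _).symm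
          _ ≤ ‖x₁ - x₂‖ ^ α := Real.rpow_le_rpow_of_exponent_ge hΔpos hle hα1
      calc |k x₁ - k x₂| ≤ M'K' * N * ‖x₁ - x₂‖ := hkLip x₁ x₂
        _ ≤ M'K' * N * ‖x₁ - x₂‖ ^ α := mul_le_mul_of_nonneg_left h1 (by positivity)
        _ ≤ (M'K' + 2 * MK') * N * ‖x₁ - x₂‖ ^ α := by nlinarith [mul_nonneg hN hrp]
    · have h1 : (1:ℝ) ≤ ‖x₁ - x₂‖ ^ α := by
        calc (1:ℝ) = (1:ℝ) ^ α := (Real.one_rpow α).symm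
          _ ≤ ‖x₁ - x₂‖ ^ α := Real.rpow_le_rpow zero_le_one (by linarith) hα.le
      have t1 := abs_le.mp (hkb x₁)
      have t2 := abs_le.mp (hkb x₂)
      rw [abs_le]
      constructor <;>
        nlinarith [mul_nonneg (mul_nonneg hMK'pos.le hN) (sub_nonneg.mpr h1),
          mul_nonneg (mul_nonneg hM'K'pos.le hN) hrp,
          mul_nonneg hMK'pos.le hN]
  -- assemble
  show MemC1aLE α (fun x => u (k x)) _
  have hfderiv : ∀ x, HasFDerivAt (fun x => u (k x)) ((fderiv ℝ u (k x)).comp (k' x)) x :=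
    fun x => ((hud (k x)).hasFDerivAt.comp x (hkderiv x))
  have hf1 : ContDiff ℝ 1 (fun x => u (k x)) := (hu.of_le (by norm_num)).comp hk1
  have hffd : ∀ x, fderiv ℝ (fun x => u (k x)) x = (fderiv ℝ u (k x)).comp (k' x) :=
    fun x => (hfderiv x).fderiv
  refine ⟨hf1, Mu 0, Mu 1 * (M'K' * N),
    Mu 2 * ((M'K' + 2 * MK') * N) * (M'K' * N) + Mu 1 * (HK' * N), ?_, fun x => ha0 _, ?_, ?_⟩
  · have p1 : (0:ℝ) ≤ Mu 1 * M'K' := by positivity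
    have p2 : (0:ℝ) ≤ Mu 1 * HK' := by positivity
    have p3 : (0:ℝ) ≤ Mu 2 * ((M'K' + 2 * MK') * M'K') := by positivity
    nlinarith [mul_nonneg p1 hN, mul_nonneg p2 hN, mul_nonneg p3 hN,
      mul_nonneg p3 (mul_nonneg hN hN), mul_nonneg p1 (mul_nonneg hN hN),
      mul_nonneg p2 (mul_nonneg hN hN), mul_nonneg hMu0 hN,
      mul_nonneg hMu0 (mul_nonneg hN hN), sq_nonneg N]
  · intro x
    rw [hffd x]
    refine (ContinuousLinearMap.opNorm_comp_le _ _).trans ?_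
    refine mul_le_mul ?_ (hk'b x) (norm_nonneg _) hMu1
    rw [hfd_u_norm]
    exact hu'bd _
  · intro x₁ x₂
    rw [hffd x₁, hffd x₂]
    have hsplit : (fderiv ℝ u (k x₁)).comp (k' x₁) - (fderiv ℝ u (k x₂)).comp (k' x₂)
        = (fderiv ℝ u (k x₁) - fderiv ℝ u (k x₂)).comp (k' x₁)
          + (fderiv ℝ u (k x₂)).comp (k' x₁ - k' x₂) := by
      apply ContinuousLinearMap.ext; intro v
      simp only [ContinuousLinearMap.add_apply, ContinuousLinearMap.comp_apply,
        ContinuousLinearMap.sub_apply, map_sub]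
      abel
    rw [hsplit]
    have e1 : ‖(fderiv ℝ u (k x₁) - fderiv ℝ u (k x₂)).comp (k' x₁)‖
        ≤ (Mu 2 * ((M'K' + 2 * MK') * N * ‖x₁ - x₂‖ ^ α)) * (M'K' * N) := by
      refine (ContinuousLinearMap.opNorm_comp_le _ _).trans ?_
      refine mul_le_mul ?_ (hk'b x₁) (norm_nonneg _) (by positivity)
      rw [hfd_u_sub]
      calc ‖deriv u (k x₁) - deriv u (k x₂)‖ ≤ Mu 2 * ‖k x₁ - k x₂‖ := hu'lip _ _
        _ ≤ Mu 2 * ((M'K' + 2 * MK') * N * ‖x₁ - x₂‖ ^ α) :=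
            mul_le_mul_of_nonneg_left (by rw [Real.norm_eq_abs]; exact khol x₁ x₂) hMu2
    have e2 : ‖(fderiv ℝ u (k x₂)).comp (k' x₁ - k' x₂)‖
        ≤ Mu 1 * (HK' * N * ‖x₁ - x₂‖ ^ α) := by
      refine (ContinuousLinearMap.opNorm_comp_le _ _).trans ?_
      refine mul_le_mul ?_ (hk'h x₁ x₂) (norm_nonneg _) hMu1
      rw [hfd_u_norm]
      exact hu'bd _
    have := (norm_add_le _ _).trans (add_le_add e1 e2)
    refine this.trans (le_of_eq ?_)
    ring
end

section
/- Let Ω ⊆ ℝ^d be open and convex, let n ∈ ℕ and 0 < α ≤ 1, and let f : Ω → ℝ be n-times continuously differentiable such that each n-th order partial derivative D^β f (β a multi-index with |β| = n) is α-Hölder on Ω with seminorm |D^β f|_α. Then for all x, x₀ ∈ Ω the Taylor remainder of order n of f at x₀ satisfies |R_n[f;x₀](x)| ≤ C_{n,α} · max_{|β|=n} |D^β f|_α · ‖x − x₀‖^{n+α}, where R_n[f;x₀](x) := f(x) − (Taylor polynomial of f of degree n centred at x₀, evaluated at x), and C_{n,α} := d^n / (α(α+1)···(α+n−1)). -/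
open Set

private lemma abs_coord_le_norm' {d : ℕ} (h : EuclideanSpace ℝ (Fin d)) (i : Fin d) :
    |h i| ≤ ‖h‖ := by
  rw [EuclideanSpace.norm_eq]
  rw [show |h i| = Real.sqrt (|h i| ^ 2) by rw [Real.sqrt_sq_eq_abs, abs_abs]]
  exact Real.sqrt_le_sqrt <|
    Finset.single_le_sum (f := fun j => |h j| ^ 2) (fun j _ => sq_nonneg _) (Finset.mem_univ i)

private lemma sum_single_eq' {d : ℕ} (h : EuclideanSpace ℝ (Fin d)) :
    ∑ i, h i • EuclideanSpace.single i (1 : ℝ) = h := by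
  apply PiLp.ext
  intro j
  rw [show ((∑ i, h i • EuclideanSpace.single i (1 : ℝ)) j)
      = ∑ i, (h i • EuclideanSpace.single i (1 : ℝ)) j by rw [WithLp.ofLp_sum, Finset.sum_apply]]
  simp [EuclideanSpace.single_apply]

private lemma key_deriv' {d : ℕ} {Ω : Set (EuclideanSpace ℝ (Fin d))} (hΩ : IsOpen Ω)
    {f : EuclideanSpace ℝ (Fin d) → ℝ} {n : ℕ} (hf' : ContDiffOn ℝ n (fderivWithin ℝ f Ω) Ω)
    (h : EuclideanSpace ℝ (Fin d)) {i : ℕ} (hi : i ≤ n) {y : EuclideanSpace ℝ (Fin d)}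
    (hy : y ∈ Ω) (v : Fin i → EuclideanSpace ℝ (Fin d)) :
    iteratedFDerivWithin ℝ i (fun u => fderivWithin ℝ f Ω u h) Ω y v
      = iteratedFDerivWithin ℝ (i + 1) f Ω y (Fin.snoc v h) := by
  have e1 : (fun u => fderivWithin ℝ f Ω u h)
      = (ContinuousLinearMap.apply ℝ ℝ h) ∘ (fderivWithin ℝ f Ω) := rfl
  rw [e1, ContinuousLinearMap.iteratedFDerivWithin_comp_left _ (hf' y hy) hΩ.uniqueDiffOn hy
      (mod_cast hi),
    iteratedFDerivWithin_succ_apply_right hΩ.uniqueDiffOn hy]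
  simp [Fin.init_snoc, Fin.snoc_last]

private lemma holder_entries' {d n : ℕ} {α H : ℝ} {Ω : Set (EuclideanSpace ℝ (Fin d))}
    {f : EuclideanSpace ℝ (Fin d) → ℝ}
    (hH : ∀ m : Fin (n + 1) → Fin d, ∀ x ∈ Ω, ∀ y ∈ Ω,
      ‖(iteratedFDerivWithin ℝ (n + 1) f Ω x) (fun j => EuclideanSpace.single (m j) 1) -
        (iteratedFDerivWithin ℝ (n + 1) f Ω y) (fun j => EuclideanSpace.single (m j) 1)‖ ≤
        H * ‖x - y‖ ^ α)
    (h : EuclideanSpace ℝ (Fin d)) (m : Fin n → Fin d) :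
    ∀ a ∈ Ω, ∀ b ∈ Ω,
      ‖iteratedFDerivWithin ℝ (n + 1) f Ω a
          (Fin.snoc (fun j => EuclideanSpace.single (m j) (1:ℝ)) h)
        - iteratedFDerivWithin ℝ (n + 1) f Ω b
          (Fin.snoc (fun j => EuclideanSpace.single (m j) (1:ℝ)) h)‖ ≤
      (H * ∑ i, |h i|) * ‖a - b‖ ^ α := by
  intro a ha b hb
  set e : Fin n → EuclideanSpace ℝ (Fin d) := fun j => EuclideanSpace.single (m j) (1:ℝ) with he
  set T := iteratedFDerivWithin ℝ (n + 1) f Ω a - iteratedFDerivWithin ℝ (n + 1) f Ω b with hT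
  have hTw : ∀ w : Fin (n + 1) → EuclideanSpace ℝ (Fin d),
      iteratedFDerivWithin ℝ (n + 1) f Ω a w - iteratedFDerivWithin ℝ (n + 1) f Ω b w = T w :=
    fun w => (ContinuousMultilinearMap.sub_apply _ _ w).symm
  rw [hTw]
  have bound : ∀ i : Fin d, ‖T (Fin.snoc e (EuclideanSpace.single i (1:ℝ)))‖ ≤ H * ‖a - b‖ ^ α := by
    intro i
    have h1 := hH (Fin.snoc m i) a ha b hb
    have h2 : (fun j => EuclideanSpace.single ((Fin.snoc m i : Fin (n+1) → Fin d) j) (1:ℝ))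
        = Fin.snoc e (EuclideanSpace.single i (1:ℝ)) := by
      funext j
      refine Fin.lastCases ?_ ?_ j <;> simp [he]
    rw [h2, hTw] at h1
    exact h1
  calc ‖T (Fin.snoc e h)‖
      = ‖∑ i, h i • T (Fin.snoc e (EuclideanSpace.single i (1:ℝ)))‖ := by
        rw [show (Fin.snoc e h : Fin (n+1) → EuclideanSpace ℝ (Fin d))
            = Function.update (Fin.snoc e h) (Fin.last n) (∑ i, h i • EuclideanSpace.single i (1:ℝ))
          by rw [sum_single_eq', Fin.update_snoc_last]]
        rw [show T (Function.update (Fin.snoc e h) (Fin.last n)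
              (∑ i, h i • EuclideanSpace.single i (1:ℝ)))
            = ∑ i, T (Function.update (Fin.snoc e h) (Fin.last n)
              (h i • EuclideanSpace.single i (1:ℝ)))
          from T.toMultilinearMap.map_update_sum Finset.univ (Fin.last n) _ _]
        congr 1
        refine Finset.sum_congr rfl fun i _ => ?_
        rw [T.map_update_smul, Fin.update_snoc_last]
    _ ≤ ∑ i, ‖h i • T (Fin.snoc e (EuclideanSpace.single i (1:ℝ)))‖ := norm_sum_le _ _
    _ = ∑ i, |h i| * ‖T (Fin.snoc e (EuclideanSpace.single i (1:ℝ)))‖ := by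
        simp [norm_smul]
    _ ≤ ∑ i, |h i| * (H * ‖a - b‖ ^ α) :=
        Finset.sum_le_sum fun i _ => mul_le_mul_of_nonneg_left (bound i) (abs_nonneg _)
    _ = (H * ∑ i, |h i|) * ‖a - b‖ ^ α := by rw [← Finset.sum_mul]; ring

/-- Hölder estimate for the Taylor remainder.  Let `Ω ⊆ ℝ^d` be
open and convex and `f : Ω → ℝ` be `n`-times continuously differentiable on `Ω`
whose `n`-th order partial derivatives are `α`-Hölder on `Ω` with seminorms at
most `H` (the partial `D^β f`, `|β| = n`, being realised as the `n`-th
derivative evaluated on the corresponding standard basis vectors).  Then for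
all `x, x₀ ∈ Ω` the Taylor remainder of order `n` of `f` at `x₀` satisfies
`|R_n[f;x₀](x)| ≤ C_{n,α} · H · ‖x − x₀‖^{n+α}` with
`C_{n,α} = d^n / (α(α+1)⋯(α+n−1))`. -/
theorem stmt12 {d : ℕ} (n : ℕ) (α : ℝ) (hα : 0 < α) (hα1 : α ≤ 1)
    (Ω : Set (EuclideanSpace ℝ (Fin d))) (hΩopen : IsOpen Ω) (hΩconv : Convex ℝ Ω)
    (f : EuclideanSpace ℝ (Fin d) → ℝ) (hf : ContDiffOn ℝ n f Ω)
    (H : ℝ)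
    (hH : ∀ m : Fin n → Fin d, ∀ x ∈ Ω, ∀ y ∈ Ω,
      ‖(iteratedFDerivWithin ℝ n f Ω x) (fun j => EuclideanSpace.single (m j) 1) -
        (iteratedFDerivWithin ℝ n f Ω y) (fun j => EuclideanSpace.single (m j) 1)‖ ≤
        H * ‖x - y‖ ^ α) :
    ∀ x ∈ Ω, ∀ x₀ ∈ Ω,
      |f x - ∑ k ∈ Finset.range (n + 1),
          ((k.factorial : ℝ))⁻¹ * (iteratedFDerivWithin ℝ k f Ω x₀) (fun _ => x - x₀)| ≤
        ((d : ℝ) ^ n / ∏ j ∈ Finset.range n, (α + (j : ℝ))) * H *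
          ‖x - x₀‖ ^ ((n : ℝ) + α) := by
  induction n generalizing f H with
  | zero =>
    intro x hx x₀ hx₀
    have h0 := hH (fun j => j.elim0) x hx x₀ hx₀
    simpa [iteratedFDerivWithin_zero_apply, Real.norm_eq_abs] using h0
  | succ n IH =>
    intro x hx x₀ hx₀
    by_cases hxx : x = x₀
    · subst hxx
      have hsum : ∑ k ∈ Finset.range (n + 1 + 1),
          ((k.factorial : ℝ))⁻¹ * (iteratedFDerivWithin ℝ k f Ω x) (fun _ => x - x) = f x := by
        rw [Finset.sum_eq_single 0]
        · simp [iteratedFDerivWithin_zero_apply]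
        · intro k _ hk
          have : (iteratedFDerivWithin ℝ k f Ω x) (fun _ => x - x) = 0 := by
            apply (iteratedFDerivWithin ℝ k f Ω x).map_coord_zero
              (i := ⟨0, Nat.pos_of_ne_zero hk⟩)
            simp
          rw [this, mul_zero]
        · simp
      rw [hsum, sub_self, abs_zero, sub_self, norm_zero,
        Real.zero_rpow (by positivity), mul_zero]
    · have hd : Nonempty (Fin d) := by
        by_contra hne
        haveI : IsEmpty (Fin d) := not_nonempty_iff.mp hne
        have hz : ‖x - x₀‖ = 0 := by rw [EuclideanSpace.norm_eq]; simp
        exact hxx (sub_eq_zero.mp (norm_eq_zero.mp hz))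
      obtain ⟨i₀⟩ := hd
      have hnorm : 0 < ‖x - x₀‖ := by
        rw [norm_pos_iff]; exact sub_ne_zero.mpr hxx
      have hHnn : 0 ≤ H := by
        have h1 := (norm_nonneg _).trans (hH (fun _ => i₀) x hx x₀ hx₀)
        have h2 : 0 < ‖x - x₀‖ ^ α := Real.rpow_pos_of_pos hnorm α
        nlinarith
      set h : EuclideanSpace ℝ (Fin d) := x - x₀ with hh
      set S : ℝ := ∑ i, |h i| with hSdef
      have hSnn : 0 ≤ S := Finset.sum_nonneg fun i _ => abs_nonneg _
      have hS : S ≤ d * ‖h‖ := by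
        calc S ≤ ∑ _i : Fin d, ‖h‖ := Finset.sum_le_sum fun i _ => abs_coord_le_norm' h i
          _ = d * ‖h‖ := by simp [Finset.sum_const, nsmul_eq_mul]
      have uD : UniqueDiffOn ℝ Ω := hΩopen.uniqueDiffOn
      have hf' : ContDiffOn ℝ n (fderivWithin ℝ f Ω) Ω :=
        hf.fderivWithin uD (by exact_mod_cast le_rfl)
      set F : EuclideanSpace ℝ (Fin d) → ℝ := fun u => fderivWithin ℝ f Ω u h with hF
      have hFc : ContDiffOn ℝ n F Ω := hf'.clm_apply contDiffOn_const
      have hH' : ∀ m : Fin n → Fin d, ∀ a ∈ Ω, ∀ b ∈ Ω,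
          ‖(iteratedFDerivWithin ℝ n F Ω a) (fun j => EuclideanSpace.single (m j) 1) -
            (iteratedFDerivWithin ℝ n F Ω b) (fun j => EuclideanSpace.single (m j) 1)‖ ≤
            (H * S) * ‖a - b‖ ^ α := by
        intro m a ha b hb
        rw [show (iteratedFDerivWithin ℝ n F Ω a) (fun j => EuclideanSpace.single (m j) 1)
            = iteratedFDerivWithin ℝ (n + 1) f Ω a
              (Fin.snoc (fun j => EuclideanSpace.single (m j) (1:ℝ)) h)
          from key_deriv' hΩopen hf' h le_rfl ha _]
        rw [show (iteratedFDerivWithin ℝ n F Ω b) (fun j => EuclideanSpace.single (m j) 1)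
            = iteratedFDerivWithin ℝ (n + 1) f Ω b
              (Fin.snoc (fun j => EuclideanSpace.single (m j) (1:ℝ)) h)
          from key_deriv' hΩopen hf' h le_rfl hb _]
        exact holder_entries' hH h m a ha b hb
      have hIH := IH F hFc (H * S) hH'
      set c : ℕ → ℝ := fun k => iteratedFDerivWithin ℝ k f Ω x₀ (fun _ => h) with hc
      set γ : ℝ → EuclideanSpace ℝ (Fin d) := fun t => x₀ + t • h with hγ
      have hγmem : ∀ t ∈ Icc (0:ℝ) 1, γ t ∈ Ω := by
        intro t ht
        have h1 : (1 - t) • x₀ + t • x ∈ Ω := hΩconv hx₀ hx (by linarith [ht.2]) ht.1 (by ring)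
        have h2 : γ t = (1 - t) • x₀ + t • x := by
          show x₀ + t • h = (1 - t) • x₀ + t • x
          rw [hh]; module
        rwa [h2]
      set Pn : ℝ := ∏ j ∈ Finset.range n, (α + (j:ℝ)) with hPn
      have hPnpos : 0 < Pn := Finset.prod_pos fun j _ => by positivity
      set K : ℝ := ((d:ℝ)^n / Pn) * (H * S) * ‖h‖ ^ ((n:ℝ) + α) with hK
      set R : ℝ → ℝ := fun t =>
        F (γ t) - ∑ k ∈ Finset.range (n + 1), ((k.factorial : ℝ))⁻¹ * t ^ k * c (k+1) with hR
      have hRbound : ∀ t ∈ Icc (0:ℝ) 1, |R t| ≤ K * t ^ ((n:ℝ) + α) := by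
        intro t ht
        have hmem := hγmem t ht
        have hthis := hIH (γ t) hmem x₀ hx₀
        have hsub : γ t - x₀ = t • h := by
          show x₀ + t • h - x₀ = t • h
          abel
        rw [hsub] at hthis
        have hterm : ∀ k ∈ Finset.range (n + 1),
            ((k.factorial : ℝ))⁻¹ * (iteratedFDerivWithin ℝ k F Ω x₀) (fun _ => t • h)
              = ((k.factorial : ℝ))⁻¹ * t ^ k * c (k+1) := by
          intro k hk
          have hsm : (iteratedFDerivWithin ℝ k F Ω x₀) (fun _ => t • h)
              = t ^ k • (iteratedFDerivWithin ℝ k F Ω x₀) (fun _ => h) := by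
            have h5 := (iteratedFDerivWithin ℝ k F Ω x₀).toMultilinearMap.map_smul_univ
              (fun _ : Fin k => t) (fun _ : Fin k => h)
            simpa [Finset.prod_const] using h5
          have hkeyF : (iteratedFDerivWithin ℝ k F Ω x₀) (fun _ : Fin k => h)
              = iteratedFDerivWithin ℝ (k+1) f Ω x₀ (Fin.snoc (fun _ : Fin k => h) h) :=
            key_deriv' hΩopen hf' h (Nat.lt_succ_iff.mp (Finset.mem_range.mp hk)) hx₀ _
          have hsnoc : (Fin.snoc (fun _ : Fin k => h) h : Fin (k+1) → EuclideanSpace ℝ (Fin d))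
              = fun _ => h := by
            funext j; refine Fin.lastCases ?_ ?_ j <;> simp
          rw [hsm, hkeyF, hsnoc, smul_eq_mul, hc]
          ring
        rw [Finset.sum_congr rfl hterm] at hthis
        have hnsm : ‖t • h‖ ^ ((n:ℝ) + α) = t ^ ((n:ℝ) + α) * ‖h‖ ^ ((n:ℝ) + α) := by
          rw [norm_smul, Real.norm_eq_abs, abs_of_nonneg ht.1,
            Real.mul_rpow ht.1 (norm_nonneg _)]
        rw [hnsm] at hthis
        calc |R t| ≤ ((d:ℝ) ^ n / Pn) * (H * S) * (t ^ ((n:ℝ) + α) * ‖h‖ ^ ((n:ℝ) + α)) := by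
              rw [hR]
              simpa [Real.norm_eq_abs] using hthis
          _ = K * t ^ ((n:ℝ) + α) := by rw [hK]; ring
      set g : ℝ → ℝ := fun t =>
        f (γ t) - ∑ k ∈ Finset.range (n + 2), ((k.factorial : ℝ))⁻¹ * t ^ k * c k with hg
      have hg' : ∀ t ∈ Icc (0:ℝ) 1, HasDerivAt g (R t) t := by
        intro t ht
        have hmem := hγmem t ht
        have hline : HasDerivAt γ h t := by
          have := ((hasDerivAt_id t).smul_const h).const_add x₀; rw [one_smul] at this; exact this
        have hfd : DifferentiableAt ℝ f (γ t) := by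
          have h1 : DifferentiableWithinAt ℝ f Ω (γ t) :=
            (hf.differentiableOn (by simp)) _ hmem
          exact h1.differentiableAt (hΩopen.mem_nhds hmem)
        have h1 : HasDerivAt (fun s => f (γ s)) (F (γ t)) t := by
          have h2 := hfd.hasFDerivAt.comp_hasDerivAt t hline
          have h3 : F (γ t) = fderiv ℝ f (γ t) h := by
            show fderivWithin ℝ f Ω (γ t) h = fderiv ℝ f (γ t) h
            rw [fderivWithin_of_isOpen hΩopen hmem]
          rw [h3]; exact h2
        have h2 : HasDerivAt (fun s : ℝ => ∑ k ∈ Finset.range (n + 2),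
            ((k.factorial : ℝ))⁻¹ * s ^ k * c k)
            (∑ k ∈ Finset.range (n + 1), ((k.factorial : ℝ))⁻¹ * t ^ k * c (k+1)) t := by
          have hterm : ∀ k ∈ Finset.range (n + 2), HasDerivAt
              (fun s : ℝ => ((k.factorial : ℝ))⁻¹ * s ^ k * c k)
              (((k.factorial : ℝ))⁻¹ * ((k : ℝ) * t ^ (k-1)) * c k) t := by
            intro k _
            exact ((hasDerivAt_pow k t).const_mul ((k.factorial : ℝ))⁻¹).mul_const (c k)
          have hsum := HasDerivAt.fun_sum hterm
          refine hsum.congr_deriv (Eq.symm ?_)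
          conv_rhs => rw [Finset.sum_range_succ']
          simp only [Nat.cast_zero, zero_mul, mul_zero, add_zero]
          refine Finset.sum_congr rfl fun k _ => ?_
          rw [Nat.factorial_succ]
          push_cast
          have hk0 : ((k:ℝ) + 1) ≠ 0 := by positivity
          have hkf : ((k.factorial : ℝ)) ≠ 0 := Nat.cast_ne_zero.mpr k.factorial_ne_zero
          field_simp
        exact h1.sub h2
      have hg0 : g 0 = 0 := by
        show f (γ 0) - ∑ k ∈ Finset.range (n + 2), ((k.factorial : ℝ))⁻¹ * (0:ℝ) ^ k * c k = 0
        have hsum0 : ∑ k ∈ Finset.range (n + 2), ((k.factorial : ℝ))⁻¹ * (0:ℝ) ^ k * c k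
            = c 0 := by
          rw [Finset.sum_eq_single 0]
          · simp
          · intro k _ hk; simp [zero_pow hk]
          · simp
        have hγ0 : γ 0 = x₀ := by show x₀ + (0:ℝ) • h = x₀; simp
        rw [hsum0, hγ0, hc]
        simp [iteratedFDerivWithin_zero_apply]
      have hγcont : Continuous γ := by
        show Continuous fun t : ℝ => x₀ + t • h
        exact continuous_const.add (continuous_id.smul continuous_const)
      have hRcont : ContinuousOn R (Icc (0:ℝ) 1) := by
        apply ContinuousOn.sub
        · exact hFc.continuousOn.comp hγcont.continuousOn hγmem
        · refine Continuous.continuousOn ?_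
          exact continuous_finset_sum _ fun k _ =>
            (continuous_const.mul (continuous_pow k)).mul continuous_const
      have hint : IntervalIntegrable R MeasureTheory.volume 0 1 := by
        have hc' : ContinuousOn R (uIcc (0:ℝ) 1) := by
          rw [uIcc_of_le zero_le_one]; exact hRcont
        exact hc'.intervalIntegrable
      have hFTC : ∫ t in (0:ℝ)..1, R t = g 1 - g 0 :=
        intervalIntegral.integral_eq_sub_of_hasDerivAt
          (fun t ht => hg' t (by rwa [uIcc_of_le zero_le_one] at ht)) hint
      have hKnn : 0 ≤ K := by
        rw [hK]
        exact mul_nonneg (mul_nonneg (by positivity) (mul_nonneg hHnn hSnn))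
          (Real.rpow_nonneg (norm_nonneg _) _)
      have hexp : (-1:ℝ) < (n:ℝ) + α := by
        have : (0:ℝ) ≤ n := Nat.cast_nonneg n
        linarith
      have hbig : |g 1| ≤ K / ((n:ℝ) + 1 + α) := by
        have hb : ∀ᵐ t ∂(MeasureTheory.volume.restrict (Set.uIoc (0:ℝ) 1)),
            ‖R t‖ ≤ K * t ^ ((n:ℝ) + α) := by
          rw [uIoc_of_le (zero_le_one (α := ℝ))]
          refine MeasureTheory.ae_restrict_of_forall_mem measurableSet_Ioc ?_
          intro t ht
          rw [Real.norm_eq_abs]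
          exact hRbound t ⟨le_of_lt ht.1, ht.2⟩
        have hKint : IntervalIntegrable (fun t : ℝ => K * t ^ ((n:ℝ) + α))
            MeasureTheory.volume 0 1 := (intervalIntegral.intervalIntegrable_rpow' hexp).const_mul K
        have hle := intervalIntegral.norm_integral_le_abs_of_norm_le hb hKint
        rw [hFTC, hg0, sub_zero] at hle
        have hval : ∫ t in (0:ℝ)..1, K * t ^ ((n:ℝ) + α) = K / ((n:ℝ) + α + 1) := by
          rw [intervalIntegral.integral_const_mul, integral_rpow (Or.inl hexp),
            Real.one_rpow, Real.zero_rpow (by positivity)]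
          ring
        rw [hval] at hle
        calc |g 1| ≤ |K / ((n:ℝ) + α + 1)| := hle
          _ = K / ((n:ℝ) + α + 1) := abs_of_nonneg (div_nonneg hKnn (by positivity))
          _ = K / ((n:ℝ) + 1 + α) := by ring_nf
      have hγ1 : γ 1 = x := by
        show x₀ + (1:ℝ) • h = x
        rw [hh]; module
      have hgoal : g 1 = f x - ∑ k ∈ Finset.range (n + 1 + 1),
          ((k.factorial : ℝ))⁻¹ * (iteratedFDerivWithin ℝ k f Ω x₀) (fun _ => h) := by
        show f (γ 1) - ∑ k ∈ Finset.range (n + 2), ((k.factorial : ℝ))⁻¹ * (1:ℝ) ^ k * c k = _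
        rw [hγ1]
        congr 1
        refine Finset.sum_congr rfl fun k _ => ?_
        rw [hc, one_pow, mul_one]
      rw [← hgoal]
      refine hbig.trans ?_
      have hprod : ∏ j ∈ Finset.range (n + 1), (α + (j:ℝ)) = Pn * (α + (n:ℝ)) := by
        rw [Finset.prod_range_succ, hPn]
      have hrpow : ‖h‖ ^ (((n:ℕ)+1 : ℕ) + α : ℝ) = ‖h‖ * ‖h‖ ^ ((n:ℝ) + α) := by
        have h1 : (((n:ℕ)+1 : ℕ) + α : ℝ) = 1 + ((n:ℝ) + α) := by push_cast; ring
        rw [h1, Real.rpow_add hnorm, Real.rpow_one]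
      rw [hprod, hrpow, hK]
      calc ((d:ℝ) ^ n / Pn) * (H * S) * ‖h‖ ^ ((n:ℝ) + α) / ((n:ℝ) + 1 + α)
          = ((d:ℝ) ^ n * (H * S) * ‖h‖ ^ ((n:ℝ) + α)) / (Pn * ((n:ℝ) + 1 + α)) := by
            have h1 : Pn ≠ 0 := ne_of_gt hPnpos
            have h2 : ((n:ℝ) + 1 + α) ≠ 0 := by positivity
            field_simp
        _ ≤ ((d:ℝ) ^ n * (H * ((d:ℝ) * ‖h‖)) * ‖h‖ ^ ((n:ℝ) + α)) / (Pn * (α + (n:ℝ))) := by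
            apply div_le_div₀
            · exact mul_nonneg (mul_nonneg (by positivity)
                (mul_nonneg hHnn (by positivity))) (Real.rpow_nonneg (norm_nonneg _) _)
            · exact mul_le_mul_of_nonneg_right (mul_le_mul_of_nonneg_left
                (mul_le_mul_of_nonneg_left hS hHnn) (by positivity))
                (Real.rpow_nonneg (norm_nonneg _) _)
            · exact mul_pos hPnpos (by positivity)
            · exact mul_le_mul_of_nonneg_left (by linarith) hPnpos.le
        _ = ((d:ℝ) ^ (n+1) / (Pn * (α + (n:ℝ)))) * H * (‖h‖ * ‖h‖ ^ ((n:ℝ) + α)) := by ring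
end
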